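/- Let T be a finite tree with positive edge weights and ρ > 0 under the postal model. Call a vertex κ a prime broadcast center if κ minimizes b_time(·, T) over V(T) and, in addition, b_time(κ, B(κ,u)) ≥ b_time(u, B(u,κ)) for every neighbor u of κ. Then a prime broadcast center of T always exists. -/

import Mathlib

/-!
Common definitions for the postal-model broadcasting problem on weighted trees.
-/

open SimpleGraph

namespace Postal

attribute [local instance] Classical.propDecidable

variable {V : Type*} [Fintype V] [DecidableEq V] (G : SimpleGraph V)

/-- The unique path (as a walk) between two vertices of a tree. -/
noncomputable def tPath (hG : G.IsTree) (u v : V) : G.Walk u v :=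
  (hG.existsUnique_path u v).exists.choose

/-- `z` lies in the open branch `O(x,y)`: the component of `T - x` containing `y`. -/
def inO (x y z : V) : Prop := ∃ p : G.Walk y z, x ∉ p.support

/-- The open branch `O(x,y)`. -/
def Obr (x y : V) : Set V := {z | inO G x y z}

/-- The closed branch `B(x,y) = T - O(x,y)` (it contains `x`). -/
def Bbr (x y : V) : Set V := {z | ¬ inO G x y z}

/-- The parent of `z` with respect to the root `u`: the penultimate vertex on the
unique `u`-to-`z` path. -/
noncomputable def parent (hG : G.IsTree) (u z : V) : V :=
  (tPath G hG u z).getVert ((tPath G hG u z).length - 1)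

/-- The receive time of `z` under schedule `σ` when `u` originates the message:
along the unique `u`-to-`z` path, each vertex is contacted in its slot `σ`,
contributing `σ·ρ` connection time plus the edge weight. -/
noncomputable def recvTime (hG : G.IsTree) (w : V → V → ℝ) (ρ : ℝ) (σ : V → ℕ) (u z : V) : ℝ :=
  ((tPath G hG u z).darts.map (fun d => (σ d.toProd.2 : ℝ) * ρ + w d.toProd.1 d.toProd.2)).sum

/-- A schedule `σ` is valid for source `u` broadcasting over the vertex set `S`:
every non-source vertex gets a slot `≥ 1`, and distinct vertices with the same
parent get distinct slots (a sender contacts its neighbors sequentially). -/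
def Valid (hG : G.IsTree) (σ : V → ℕ) (u : V) (S : Set V) : Prop :=
  (∀ z ∈ S, z ≠ u → 1 ≤ σ z) ∧
  (∀ z₁ ∈ S, ∀ z₂ ∈ S, z₁ ≠ u → z₂ ≠ u → z₁ ≠ z₂ →
    parent G hG u z₁ = parent G hG u z₂ → σ z₁ ≠ σ z₂)

/-- The minimum broadcast time for `u` to broadcast a message over the subtree
induced by `S` under the postal model with latency `ρ`. -/
noncomputable def bTime (hG : G.IsTree) (w : V → V → ℝ) (ρ : ℝ) (u : V) (S : Set V) : ℝ :=
  sInf {m | ∃ σ, Valid G hG σ u S ∧ m = sSup ((recvTime G hG w ρ σ u) '' S)}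

/-- Broadcast time over the whole tree. -/
noncomputable def bTimeT (hG : G.IsTree) (w : V → V → ℝ) (ρ : ℝ) (u : V) : ℝ :=
  bTime G hG w ρ u Set.univ

/-- The set of broadcast centers. -/
def BCtr (hG : G.IsTree) (w : V → V → ℝ) (ρ : ℝ) : Set V :=
  {u | ∀ v, bTimeT G hG w ρ u ≤ bTimeT G hG w ρ v}

/-- A prime broadcast center. -/
def IsPrime (hG : G.IsTree) (w : V → V → ℝ) (ρ : ℝ) (κ : V) : Prop :=
  κ ∈ BCtr G hG w ρ ∧
  ∀ u, G.Adj κ u → bTime G hG w ρ u (Bbr G u κ) ≤ bTime G hG w ρ κ (Bbr G κ u)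

/-- Hop distance: number of edges on the unique path. -/
noncomputable def hop (hG : G.IsTree) (x y : V) : ℕ := (tPath G hG x y).length

/-- Total weight of the unique `x`-to-`y` path. -/
noncomputable def pw (hG : G.IsTree) (w : V → V → ℝ) (x y : V) : ℝ :=
  ((tPath G hG x y).darts.map (fun d => w d.toProd.1 d.toProd.2)).sum

/-- Symmetric weight function. -/
def Wsymm (w : V → V → ℝ) : Prop := ∀ a b, w a b = w b a

/-- Positive weights on edges. -/
def Wpos (w : V → V → ℝ) : Prop := ∀ a b, G.Adj a b → 0 < w a b

/-- A scenario: a symmetric weight assignment within the uncertainty intervals. -/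
def Scenario (lo hi : V → V → ℝ) (w : V → V → ℝ) : Prop :=
  (∀ a b, w a b = w b a) ∧ ∀ a b, G.Adj a b → lo a b ≤ w a b ∧ w a b ≤ hi a b

/-- The maximum regret of `x`. -/
noncomputable def maxRegret (hG : G.IsTree) (lo hi : V → V → ℝ) (ρ : ℝ) (x : V) : ℝ :=
  sSup {r | ∃ w y, Scenario G lo hi w ∧ r = bTimeT G hG w ρ x - bTimeT G hG w ρ y}

/-- `w` is a worst-case scenario of the tree with respect to `x`. -/
def WorstCase (hG : G.IsTree) (lo hi : V → V → ℝ) (ρ : ℝ) (x : V) (w : V → V → ℝ) : Prop :=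
  Scenario G lo hi w ∧
  ∃ y, bTimeT G hG w ρ x - bTimeT G hG w ρ y = maxRegret G hG lo hi ρ x

/-- An edge `(a,b)` lies on the unique `x`-to-`y` path. -/
def onPath (hG : G.IsTree) (x y a b : V) : Prop :=
  a ∈ (tPath G hG x y).support ∧ b ∈ (tPath G hG x y).support

/-- The base scenario `α_{x,y}`: weight `hi` on the `x`-to-`y` path and on edges of
`B(y,x)`, weight `lo` elsewhere. -/
noncomputable def baseScenario (hG : G.IsTree) (lo hi : V → V → ℝ) (x y : V) : V → V → ℝ :=
  fun a b =>
    if onPath G hG x y a b ∨ (a ∈ Bbr G y x ∧ b ∈ Bbr G y x) then hi a b else lo a b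

/-- The value `w(y,v) + b_time(v, B(v,y))` of a neighbor `v` of `y`. -/
noncomputable def nval (hG : G.IsTree) (w : V → V → ℝ) (ρ : ℝ) (y v : V) : ℝ :=
  w y v + bTime G hG w ρ v (Bbr G v y)

/-- Scenario `β^j_{x,y}`: agrees with `α_{x,y}`, except that every edge in
`{(y,u_k)} ∪ E(B(u_k,y))` for `k > j` (with `u` the 1-based sorted enumeration
of the neighbors of `y` in `B(y,x)`) gets weight `lo`. -/
noncomputable def betaScenario (hG : G.IsTree) (lo hi : V → V → ℝ) (x y : V) {h : ℕ}
    (u : Fin h → V) (j : ℕ) : V → V → ℝ :=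
  fun a b =>
    if ∃ k : Fin h, j < (k : ℕ) + 1 ∧
        ((a = y ∧ b = u k) ∨ (b = y ∧ a = u k) ∨
          (a ∈ Bbr G (u k) y ∧ b ∈ Bbr G (u k) y)) then
      lo a b
    else baseScenario G hG lo hi x y a b

/-- Scenario `γ^j_{x,y}`: agrees with `α_{x,y}` on the edges in
`⋃_{1 ≤ k ≤ j} ({(y,u_k)} ∪ E(B(u_k,y)))` and with the scenario `s` elsewhere. -/
noncomputable def gammaScenario (hG : G.IsTree) (lo hi : V → V → ℝ) (s : V → V → ℝ)
    (x y : V) {h : ℕ} (u : Fin h → V) (j : ℕ) : V → V → ℝ :=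
  fun a b =>
    if ∃ k : Fin h, (k : ℕ) + 1 ≤ j ∧
        ((a = y ∧ b = u k) ∨ (b = y ∧ a = u k) ∨
          (a ∈ Bbr G (u k) y ∧ b ∈ Bbr G (u k) y)) then
      baseScenario G hG lo hi x y a b
    else s a b

/-- The set of neighbors of `y` inside the branch `B(y,x)`. -/
def nbrIn (x y : V) : Set V := {v | G.Adj y v ∧ v ∈ Bbr G y x}


/-! ### Auxiliary lemmas for the existence of a prime broadcast center -/

section Aux

open SimpleGraph Walk

variable (hG : G.IsTree)

lemma tPath_isPath (u v : V) : (tPath G hG u v).IsPath :=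
  (hG.existsUnique_path u v).exists.choose_spec

lemma tPath_eq {u v : V} {p : G.Walk u v} (hp : p.IsPath) : p = tPath G hG u v :=
  (hG.existsUnique_path u v).unique hp (tPath_isPath G hG u v)

lemma tPath_self (u : V) : tPath G hG u u = Walk.nil :=
  (tPath_eq G hG Walk.IsPath.nil).symm

lemma inO_iff {x y z : V} : inO G x y z ↔ x ∉ (tPath G hG y z).support := by
  constructor
  · rintro ⟨p, hp⟩
    have h1 : ((p.toPath : G.Walk y z)) = tPath G hG y z := tPath_eq G hG p.toPath.2
    intro hx
    exact hp (Walk.support_toPath_subset p (h1 ▸ hx))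
  · intro h; exact ⟨_, h⟩

lemma mem_bbr_iff {x y z : V} (hxy : G.Adj x y) :
    z ∈ Bbr G x y ↔ y ∉ (tPath G hG x z).support := by
  rw [Bbr, Set.mem_setOf_eq, inO_iff G hG]
  constructor
  · intro hx hy
    have hx' : x ∈ (tPath G hG y z).support := not_not.mp hx
    have hdrop : ((tPath G hG x z).dropUntil y hy) = tPath G hG y z :=
      tPath_eq G hG ((tPath_isPath G hG x z).dropUntil hy)
    rw [← hdrop] at hx'
    have hspec := (tPath G hG x z).take_spec hy
    have hnodup := (tPath_isPath G hG x z).support_nodup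
    rw [← hspec, Walk.support_append] at hnodup
    have hxtake : x ∈ ((tPath G hG x z).takeUntil y hy).support := Walk.start_mem_support _
    have hxdroptail : x ∈ ((tPath G hG x z).dropUntil y hy).support.tail := by
      have hsc := Walk.support_eq_cons ((tPath G hG x z).dropUntil y hy)
      rw [hsc] at hx'
      rcases List.mem_cons.mp hx' with h | h
      · exact absurd h hxy.ne
      · exact h
    exact (List.disjoint_of_nodup_append hnodup) hxtake hxdroptail
  · intro hy hx
    have hp : (Walk.cons hxy (tPath G hG y z)).IsPath := (tPath_isPath G hG y z).cons hx
    have heq := tPath_eq G hG hp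
    apply hy
    rw [← heq, Walk.support_cons]
    exact List.mem_cons_of_mem _ (Walk.start_mem_support _)

include hG in
lemma not_mem_bbr_self {x y : V} (hxy : G.Adj x y) : y ∉ Bbr G x y := by
  intro h
  rw [mem_bbr_iff G hG hxy] at h
  exact h (Walk.end_mem_support _)

include hG in
lemma self_mem_bbr {x y : V} (hxy : G.Adj x y) : x ∈ Bbr G x y := by
  rw [mem_bbr_iff G hG hxy, tPath_self G hG]
  simp [hxy.ne']

include hG in
lemma bbr_compl {x y z : V} (hxy : G.Adj x y) : z ∉ Bbr G x y ↔ z ∈ Bbr G y x := by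
  rw [mem_bbr_iff G hG hxy.symm, Bbr, Set.mem_setOf_eq, not_not, inO_iff G hG]

lemma tPath_cons {x y z : V} (hxy : G.Adj x y) (hz : z ∈ Bbr G y x) :
    tPath G hG x z = Walk.cons hxy (tPath G hG y z) := by
  have hx : x ∉ (tPath G hG y z).support := (mem_bbr_iff G hG hxy.symm).mp hz
  exact (tPath_eq G hG ((tPath_isPath G hG y z).cons hx)).symm

lemma bbr_closed {x y z v : V} (hxy : G.Adj x y) (hz : z ∈ Bbr G x y)
    (hv : v ∈ (tPath G hG x z).support) : v ∈ Bbr G x y := by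
  rw [mem_bbr_iff G hG hxy] at hz ⊢
  have heq : ((tPath G hG x z).takeUntil v hv) = tPath G hG x v :=
    tPath_eq G hG ((tPath_isPath G hG x z).takeUntil hv)
  rw [← heq]
  intro hy
  exact hz (Walk.support_takeUntil_subset _ hv hy)

lemma getVert_ne_start {x z : V} {p : G.Walk x z} (hp : p.IsPath) {n : ℕ}
    (h1 : 1 ≤ n) (h2 : n ≤ p.length) : p.getVert n ≠ x := by
  cases p with
  | nil => simp at h2; omega
  | cons h q =>
    rw [Walk.getVert_cons q h (by omega : n ≠ 0)]
    intro hx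
    have hll : n - 1 ≤ q.length := by
      rw [Walk.length_cons] at h2; omega
    have hmem : q.getVert (n - 1) ∈ q.support :=
      Walk.mem_support_iff_exists_getVert.mpr ⟨n - 1, rfl, hll⟩
    rw [hx] at hmem
    exact ((Walk.cons_isPath_iff h q).mp hp).2 hmem

lemma parent_mem_support (x z : V) : parent G hG x z ∈ (tPath G hG x z).support :=
  Walk.mem_support_iff_exists_getVert.mpr ⟨_, rfl, Nat.sub_le _ _⟩

lemma length_eq_one_of_parent {x z : V} (hzx : z ≠ x) (h : parent G hG x z = x) :
    (tPath G hG x z).length = 1 := by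
  have hl : (tPath G hG x z).length ≠ 0 := fun h0 => hzx (Walk.eq_of_length_eq_zero h0).symm
  by_contra hne
  exact getVert_ne_start G (tPath_isPath G hG x z)
    (n := (tPath G hG x z).length - 1) (by omega) (by omega) h

lemma parent_eq {x y z : V} (hxy : G.Adj x y) (hz : z ∈ Bbr G y x) (hzy : z ≠ y) :
    parent G hG x z = parent G hG y z := by
  have hcons := tPath_cons G hG hxy hz
  have hl : (tPath G hG y z).length ≠ 0 := fun h0 => hzy (Walk.eq_of_length_eq_zero h0).symm
  rw [parent, parent, hcons, Walk.length_cons, Nat.add_sub_cancel,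
    Walk.getVert_cons _ _ hl]

lemma parent_of_adj {x y : V} (hxy : G.Adj x y) : parent G hG x y = x := by
  have h1 : tPath G hG x y = Walk.cons hxy Walk.nil := by
    refine (tPath_eq G hG ?_).symm
    rw [Walk.cons_isPath_iff]
    exact ⟨Walk.IsPath.nil, by simp [hxy.ne]⟩
  rw [parent, h1]
  rfl

lemma eq_getVert_one {x z v : V} (hv : v ∈ (tPath G hG x z).support) (hvx : v ≠ x)
    (hpar : parent G hG x v = x) : v = (tPath G hG x z).getVert 1 := by
  have ht : ((tPath G hG x z).takeUntil v hv) = tPath G hG x v :=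
    tPath_eq G hG ((tPath_isPath G hG x z).takeUntil hv)
  have hlen : ((tPath G hG x z).takeUntil v hv).length = 1 := by
    rw [ht]; exact length_eq_one_of_parent G hG hvx hpar
  have hspec := (tPath G hG x z).take_spec hv
  have h2 : (tPath G hG x z).getVert 1 = v := by
    conv_lhs => rw [← hspec]
    rw [Walk.getVert_append, hlen]
    simp
  exact h2.symm

lemma tail_ne_start {u z : V} {p : G.Walk u z} (hp : p.IsPath) {v : V}
    (hv : v ∈ p.support.tail) : v ≠ u := by
  intro h
  subst h
  have hnd := hp.support_nodup
  rw [Walk.support_eq_cons p] at hnd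
  exact (List.nodup_cons.mp hnd).1 hv

lemma recv_nil (w : V → V → ℝ) (ρ : ℝ) (σ : V → ℕ) (u : V) :
    recvTime G hG w ρ σ u u = 0 := by
  rw [recvTime, tPath_self G hG]
  simp

lemma recv_congr (w : V → V → ℝ) (ρ : ℝ) {σ σ' : V → ℕ} {u z : V}
    (h : ∀ v ∈ (tPath G hG u z).support.tail, σ v = σ' v) :
    recvTime G hG w ρ σ u z = recvTime G hG w ρ σ' u z := by
  rw [recvTime, recvTime]
  congr 1
  apply List.map_congr_left
  intro d hd
  have hmem : d.snd ∈ (tPath G hG u z).support.tail := by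
    rw [← Walk.map_snd_darts]
    exact List.mem_map_of_mem hd
  rw [show (σ d.toProd.2 : ℝ) = (σ' d.toProd.2 : ℝ) by rw [h _ hmem]]

lemma recv_cons (w : V → V → ℝ) (ρ : ℝ) (σ : V → ℕ) {x y z : V}
    (hxy : G.Adj x y) (hz : z ∈ Bbr G y x) :
    recvTime G hG w ρ σ x z = (σ y : ℝ) * ρ + w x y + recvTime G hG w ρ σ y z := by
  rw [recvTime, recvTime, tPath_cons G hG hxy hz, Walk.darts_cons]
  simp [add_assoc]

lemma recv_nonneg {w : V → V → ℝ} {ρ : ℝ} (hpos : Wpos G w) (hρ : 0 < ρ)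
    (σ : V → ℕ) (u z : V) : 0 ≤ recvTime G hG w ρ σ u z := by
  rw [recvTime]
  apply List.sum_nonneg
  intro a ha
  obtain ⟨d, hd, rfl⟩ := List.mem_map.mp ha
  have hadj := d.adj
  have hw := hpos _ _ hadj
  have h0 : (0:ℝ) ≤ (σ d.toProd.2 : ℝ) := Nat.cast_nonneg _
  nlinarith

lemma list_sum_map_add {α : Type*} (l : List α) (f g : α → ℝ) :
    (l.map (fun a => f a + g a)).sum = (l.map f).sum + (l.map g).sum := by
  induction l with
  | nil => simp
  | cons a l ih => simp only [List.map_cons, List.sum_cons, ih]; ring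

lemma sum_ite_le {α : Type*} (t : List α) (f : α → ℝ) (c : ℝ) (hc : 0 ≤ c)
    (hf : ∀ a, f a = c ∨ f a = 0)
    (hnd : t.Nodup) (huniq : ∀ a ∈ t, ∀ b ∈ t, f a ≠ 0 → f b ≠ 0 → a = b) :
    (t.map f).sum ≤ c := by
  induction t with
  | nil => simpa using hc
  | cons a t ih =>
    simp only [List.map_cons, List.sum_cons]
    by_cases hfa : f a = 0
    · rw [hfa, zero_add]
      exact ih (List.nodup_cons.mp hnd).2
        (fun a' ha' b hb => huniq _ (List.mem_cons_of_mem _ ha') _ (List.mem_cons_of_mem _ hb))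
    · have hsum0 : (t.map f).sum = 0 := by
        apply List.sum_eq_zero
        intro x hx
        obtain ⟨v, hv, rfl⟩ := List.mem_map.mp hx
        by_contra hv0
        exact (List.nodup_cons.mp hnd).1
          ((huniq a List.mem_cons_self v (List.mem_cons_of_mem _ hv) hfa hv0) ▸ hv)
      rw [hsum0, add_zero]
      rcases hf a with h | h
      · exact le_of_eq h
      · exact absurd h hfa

lemma recv_le_bump (w : V → V → ℝ) {ρ : ℝ} (hρ : 0 < ρ) (σ1 : V → ℕ) (x z : V) :
    recvTime G hG w ρ (fun v => if parent G hG x v = x ∧ v ≠ x then σ1 v + 1 else σ1 v) x z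
      ≤ recvTime G hG w ρ σ1 x z + ρ := by
  have hp : tPath G hG x z = tPath G hG x z := rfl
  have key : ∀ d ∈ (tPath G hG x z).darts,
      (((if parent G hG x d.toProd.2 = x ∧ d.toProd.2 ≠ x then σ1 d.toProd.2 + 1
          else σ1 d.toProd.2 : ℕ) : ℝ) * ρ + w d.toProd.1 d.toProd.2)
        = (((σ1 d.toProd.2 : ℝ) * ρ + w d.toProd.1 d.toProd.2)
          + (if parent G hG x d.toProd.2 = x ∧ d.toProd.2 ≠ x then ρ else 0)) := by
    intro d _
    by_cases h : parent G hG x d.toProd.2 = x ∧ d.toProd.2 ≠ x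
    · rw [if_pos h, if_pos h]; push_cast; ring
    · rw [if_neg h, if_neg h]; ring
  have hmap : (tPath G hG x z).darts.map
      (fun d => if parent G hG x d.toProd.2 = x ∧ d.toProd.2 ≠ x then ρ else 0)
      = (tPath G hG x z).support.tail.map
        (fun v => if parent G hG x v = x ∧ v ≠ x then ρ else 0) := by
    rw [← Walk.map_snd_darts, List.map_map]
    rfl
  have hnd : (tPath G hG x z).support.tail.Nodup := by
    have hnodup := (tPath_isPath G hG x z).support_nodup
    rw [Walk.support_eq_cons (tPath G hG x z)] at hnodup
    exact (List.nodup_cons.mp hnodup).2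
  have huniq : ∀ a ∈ (tPath G hG x z).support.tail, ∀ b ∈ (tPath G hG x z).support.tail,
      (parent G hG x a = x ∧ a ≠ x) → (parent G hG x b = x ∧ b ≠ x) → a = b := by
    intro a ha b hb hPa hPb
    have ha' : a ∈ (tPath G hG x z).support := List.mem_of_mem_tail ha
    have hb' : b ∈ (tPath G hG x z).support := List.mem_of_mem_tail hb
    rw [eq_getVert_one G hG ha' hPa.2 hPa.1, eq_getVert_one G hG hb' hPb.2 hPb.1]
  have hsum : (List.map (fun v => if parent G hG x v = x ∧ v ≠ x then ρ else 0)
      (tPath G hG x z).support.tail).sum ≤ ρ := by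
    refine sum_ite_le _ _ ρ hρ.le ?_ hnd ?_
    · intro a
      by_cases h : parent G hG x a = x ∧ a ≠ x
      · exact Or.inl (if_pos h)
      · exact Or.inr (if_neg h)
    · intro a ha b hb hfa hfb
      have hPa : parent G hG x a = x ∧ a ≠ x := by
        by_contra h; exact hfa (if_neg h)
      have hPb : parent G hG x b = x ∧ b ≠ x := by
        by_contra h; exact hfb (if_neg h)
      exact huniq a ha b hb hPa hPb
  rw [recvTime, recvTime]
  have step1 : (((tPath G hG x z).darts).map
      (fun d => (((σ1 d.toProd.2 : ℝ) * ρ + w d.toProd.1 d.toProd.2)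
        + (if parent G hG x d.toProd.2 = x ∧ d.toProd.2 ≠ x then ρ else 0)))).sum
      ≤ (((tPath G hG x z).darts).map
        (fun d => (σ1 d.toProd.2 : ℝ) * ρ + w d.toProd.1 d.toProd.2)).sum + ρ := by
    rw [list_sum_map_add, hmap]
    linarith
  exact le_trans (le_of_eq (congr_arg List.sum (List.map_congr_left key))) step1

lemma bset_nonempty (w : V → V → ℝ) (ρ : ℝ) (u : V) (S : Set V) :
    {m | ∃ σ, Valid G hG σ u S ∧ m = sSup ((recvTime G hG w ρ σ u) '' S)}.Nonempty := by
  refine ⟨_, fun v => (Fintype.equivFin V v : ℕ) + 1, ⟨?_, ?_⟩, rfl⟩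
  · intro z _ _
    exact Nat.le_add_left 1 _
  · intro z1 _ z2 _ _ _ hne _ h
    apply hne
    apply (Fintype.equivFin V).injective
    apply Fin.val_injective
    simpa using h

lemma bset_nonneg {w : V → V → ℝ} {ρ : ℝ} (hpos : Wpos G w) (hρ : 0 < ρ)
    {u : V} {S : Set V} {m : ℝ}
    (hm : m ∈ {m | ∃ σ, Valid G hG σ u S ∧ m = sSup ((recvTime G hG w ρ σ u) '' S)}) :
    0 ≤ m := by
  obtain ⟨σ, -, rfl⟩ := hm
  rcases Set.eq_empty_or_nonempty S with h | h
  · simp [h, Real.sSup_empty]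
  · obtain ⟨z, hz⟩ := h
    have h1 : recvTime G hG w ρ σ u z ∈ (recvTime G hG w ρ σ u) '' S := ⟨z, hz, rfl⟩
    exact le_trans (recv_nonneg G hG hpos hρ σ u z)
      (le_csSup ((S.toFinite.image _).bddAbove) h1)

lemma bset_bddBelow {w : V → V → ℝ} {ρ : ℝ} (hpos : Wpos G w) (hρ : 0 < ρ)
    (u : V) (S : Set V) :
    BddBelow {m | ∃ σ, Valid G hG σ u S ∧ m = sSup ((recvTime G hG w ρ σ u) '' S)} :=
  ⟨0, fun _ hm => bset_nonneg G hG hpos hρ hm⟩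

lemma key_low {w : V → V → ℝ} {ρ : ℝ} (hpos : Wpos G w) (hρ : 0 < ρ)
    {x y : V} (hxy : G.Adj x y) (S : Set V) (hS : Bbr G x y ⊆ S) :
    ρ + w y x + bTime G hG w ρ x (Bbr G x y) ≤ bTime G hG w ρ y S := by
  rw [show bTime G hG w ρ y S
      = sInf {m | ∃ σ, Valid G hG σ y S ∧ m = sSup ((recvTime G hG w ρ σ y) '' S)} from rfl]
  apply le_csInf (bset_nonempty G hG w ρ y S)
  rintro m ⟨σ, hσ, rfl⟩
  have hvx : Valid G hG σ x (Bbr G x y) := by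
    constructor
    · intro z hz hzx
      exact hσ.1 z (hS hz) (fun h => not_mem_bbr_self G hG hxy (h ▸ hz))
    · intro z1 hz1 z2 hz2 h1 h2 hne hpar
      have e1 : parent G hG y z1 = parent G hG x z1 := parent_eq G hG hxy.symm hz1 h1
      have e2 : parent G hG y z2 = parent G hG x z2 := parent_eq G hG hxy.symm hz2 h2
      exact hσ.2 z1 (hS hz1) z2 (hS hz2)
        (fun h => not_mem_bbr_self G hG hxy (h ▸ hz1))
        (fun h => not_mem_bbr_self G hG hxy (h ▸ hz2)) hne (by rw [e1, e2, hpar])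
  have hmem : sSup ((recvTime G hG w ρ σ x) '' (Bbr G x y))
      ∈ {m | ∃ σ', Valid G hG σ' x (Bbr G x y)
          ∧ m = sSup ((recvTime G hG w ρ σ' x) '' (Bbr G x y))} := ⟨σ, hvx, rfl⟩
  have hb : bTime G hG w ρ x (Bbr G x y) ≤ sSup ((recvTime G hG w ρ σ x) '' (Bbr G x y)) :=
    csInf_le (bset_bddBelow G hG hpos hρ x (Bbr G x y)) hmem
  have hne : ((recvTime G hG w ρ σ x) '' (Bbr G x y)).Nonempty :=
    ⟨_, ⟨x, self_mem_bbr G hG hxy, rfl⟩⟩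
  obtain ⟨z0, hz0, hz0e⟩ := hne.csSup_mem (Set.toFinite _)
  have hrecv : recvTime G hG w ρ σ y z0 = (σ x : ℝ) * ρ + w y x + recvTime G hG w ρ σ x z0 :=
    recv_cons G hG w ρ σ hxy.symm hz0
  have hσx : 1 ≤ σ x := hσ.1 x (hS (self_mem_bbr G hG hxy)) hxy.ne
  have hσx' : (1:ℝ) ≤ (σ x : ℝ) := by exact_mod_cast hσx
  have hle : recvTime G hG w ρ σ y z0 ≤ sSup ((recvTime G hG w ρ σ y) '' S) :=
    le_csSup ((S.toFinite.image _).bddAbove) ⟨z0, hS hz0, rfl⟩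
  have hmul : ρ ≤ (σ x : ℝ) * ρ := le_mul_of_one_le_left hρ.le hσx'
  linarith [hz0e ▸ hb]

include hG in
lemma bbr_subset {x y z : V} (hxy : G.Adj x y) (hyz : G.Adj y z) (hxz : x ≠ z) :
    Bbr G x y ⊆ Bbr G y z := by
  intro v hv
  rw [mem_bbr_iff G hG hxy] at hv
  rw [mem_bbr_iff G hG hyz]
  intro hzv
  have hcons : tPath G hG y v = Walk.cons hxy.symm (tPath G hG x v) :=
    (tPath_eq G hG ((tPath_isPath G hG x v).cons hv)).symm
  rw [hcons, Walk.support_cons] at hzv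
  rcases List.mem_cons.mp hzv with h | h
  · exact hyz.ne h.symm
  · have hxyz : tPath G hG x z = Walk.cons hxy (Walk.cons hyz Walk.nil) := by
      refine (tPath_eq G hG ?_).symm
      rw [Walk.cons_isPath_iff, Walk.cons_isPath_iff]
      refine ⟨⟨Walk.IsPath.nil, by simp [hyz.ne]⟩, by simp [hxy.ne, hxz]⟩
    have ht : ((tPath G hG x v).takeUntil z h) = tPath G hG x z :=
      tPath_eq G hG ((tPath_isPath G hG x v).takeUntil h)
    have hy : y ∈ ((tPath G hG x v).takeUntil z h).support := by
      rw [ht, hxyz]; simp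
    exact hv (Walk.support_takeUntil_subset _ h hy)

lemma key_up {w : V → V → ℝ} {ρ : ℝ} (hpos : Wpos G w) (hρ : 0 < ρ)
    {x y : V} (hxy : G.Adj x y) :
    bTimeT G hG w ρ x
      ≤ ρ + w x y + max (bTime G hG w ρ x (Bbr G x y)) (bTime G hG w ρ y (Bbr G y x)) := by
  have hVne : Nonempty V := ⟨x⟩
  apply le_of_forall_pos_le_add
  intro ε hε
  obtain ⟨m1, ⟨σ1, hσ1, hm1e⟩, hm1lt⟩ :=
    exists_lt_of_csInf_lt (bset_nonempty G hG w ρ x (Bbr G x y))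
      (lt_add_of_pos_right (bTime G hG w ρ x (Bbr G x y)) hε)
  obtain ⟨m2, ⟨σ2, hσ2, hm2e⟩, hm2lt⟩ :=
    exists_lt_of_csInf_lt (bset_nonempty G hG w ρ y (Bbr G y x))
      (lt_add_of_pos_right (bTime G hG w ρ y (Bbr G y x)) hε)
  set f1 := bTime G hG w ρ x (Bbr G x y) with hf1
  set f2 := bTime G hG w ρ y (Bbr G y x) with hf2
  set σ : V → ℕ := fun v => if v = y then 1
    else if v ∈ Bbr G x y then (if parent G hG x v = x ∧ v ≠ x then σ1 v + 1 else σ1 v)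
    else σ2 v with hσdef
  have hyB : y ∉ Bbr G x y := not_mem_bbr_self G hG hxy
  have hxB : x ∈ Bbr G x y := self_mem_bbr G hG hxy
  have hvalid : Valid G hG σ x Set.univ := by
    constructor
    · intro z _ hzx
      by_cases hzy : z = y
      · simp [hσdef, hzy]
      · by_cases hzB : z ∈ Bbr G x y
        · have h1 := hσ1.1 z hzB hzx
          simp only [hσdef, if_neg hzy, if_pos hzB]
          split <;> omega
        · have hz2 : z ∈ Bbr G y x := (bbr_compl G hG hxy).mp hzB
          have := hσ2.1 z hz2 hzy
          simpa [hσdef, hzy, hzB]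
    · intro z1 _ z2 _ h1x h2x hne hpar
      have hparmem1 : ∀ z : V, z ∈ Bbr G x y → parent G hG x z ∈ Bbr G x y :=
        fun z hz => bbr_closed G hG hxy hz (parent_mem_support G hG x z)
      have hparmem2 : ∀ z : V, z ∈ Bbr G y x → z ≠ y → parent G hG x z ∈ Bbr G y x := by
        intro z hz hzy
        rw [parent_eq G hG hxy hz hzy]
        exact bbr_closed G hG hxy.symm hz (parent_mem_support G hG y z)
      have key2 : ∀ z : V, z ≠ x → z ≠ y → parent G hG x z = x → z ∈ Bbr G x y := by
        intro z hzx hzy hp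
        by_contra hzB
        have hz2 : z ∈ Bbr G y x := (bbr_compl G hG hxy).mp hzB
        have hmem := hparmem2 z hz2 hzy
        rw [hp] at hmem
        exact ((bbr_compl G hG hxy).mpr hmem) hxB
      by_cases hz1y : z1 = y
      · have hp2 : parent G hG x z2 = x := by
          rw [← hpar, hz1y, parent_of_adj G hG hxy]
        have hz2y : z2 ≠ y := fun h => hne (hz1y.trans h.symm)
        have hz2B : z2 ∈ Bbr G x y := key2 z2 h2x hz2y hp2
        have hb2 : σ z2 = σ1 z2 + 1 := by
          simp only [hσdef, if_neg hz2y, if_pos hz2B, if_pos (And.intro hp2 h2x)]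
        have hb1 : σ z1 = 1 := by simp [hσdef, hz1y]
        have h1 := hσ1.1 z2 hz2B h2x
        omega
      · by_cases hz2y : z2 = y
        · have hp1 : parent G hG x z1 = x := by
            rw [hpar, hz2y, parent_of_adj G hG hxy]
          have hz1B : z1 ∈ Bbr G x y := key2 z1 h1x hz1y hp1
          have hb1 : σ z1 = σ1 z1 + 1 := by
            simp only [hσdef, if_neg hz1y, if_pos hz1B, if_pos (And.intro hp1 h1x)]
          have hb2 : σ z2 = 1 := by simp [hσdef, hz2y]
          have h1 := hσ1.1 z1 hz1B h1x
          omega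
        · by_cases hz1B : z1 ∈ Bbr G x y
          · have hz2B : z2 ∈ Bbr G x y := by
              by_contra hz2B
              have hz2' : z2 ∈ Bbr G y x := (bbr_compl G hG hxy).mp hz2B
              have hm2 := hparmem2 z2 hz2' hz2y
              have hm1 := hparmem1 z1 hz1B
              rw [hpar] at hm1
              exact ((bbr_compl G hG hxy).mpr hm2) hm1
            have hd := hσ1.2 z1 hz1B z2 hz2B h1x h2x hne hpar
            simp only [hσdef, if_neg hz1y, if_neg hz2y, if_pos hz1B, if_pos hz2B]
            by_cases hc : parent G hG x z1 = x
            · have hc2 : parent G hG x z2 = x := by rw [← hpar]; exact hc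
              rw [if_pos (And.intro hc h1x), if_pos (And.intro hc2 h2x)]
              omega
            · rw [if_neg (fun hh => hc hh.1),
                if_neg (fun hh => hc (by rw [hpar]; exact hh.1))]
              exact hd
          · have hz1' : z1 ∈ Bbr G y x := (bbr_compl G hG hxy).mp hz1B
            have hz2B : z2 ∉ Bbr G x y := by
              intro hz2B
              have hm2 := hparmem1 z2 hz2B
              have hm1 := hparmem2 z1 hz1' hz1y
              rw [hpar] at hm1
              exact ((bbr_compl G hG hxy).mpr hm1) hm2
            have hz2' : z2 ∈ Bbr G y x := (bbr_compl G hG hxy).mp hz2B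
            have e1 : parent G hG x z1 = parent G hG y z1 := parent_eq G hG hxy hz1' hz1y
            have e2 : parent G hG x z2 = parent G hG y z2 := parent_eq G hG hxy hz2' hz2y
            have hd := hσ2.2 z1 hz1' z2 hz2' hz1y hz2y hne (by rw [← e1, ← e2, hpar])
            simpa [hσdef, hz1y, hz2y, hz1B, hz2B] using hd
  have hwxy := hpos x y hxy
  have hbound : ∀ z : V, recvTime G hG w ρ σ x z ≤ ρ + w x y + max f1 f2 + ε := by
    intro z
    by_cases hzB : z ∈ Bbr G x y
    · have hcong : recvTime G hG w ρ σ x z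
          = recvTime G hG w ρ
            (fun v => if parent G hG x v = x ∧ v ≠ x then σ1 v + 1 else σ1 v) x z := by
        apply recv_congr
        intro v hv
        have hvB : v ∈ Bbr G x y :=
          bbr_closed G hG hxy hzB (List.mem_of_mem_tail hv)
        have hvy : v ≠ y := fun h => hyB (h ▸ hvB)
        simp only [hσdef, if_neg hvy, if_pos hvB]
      have h1 := recv_le_bump G hG w hρ σ1 x z
      have h2 : recvTime G hG w ρ σ1 x z ≤ m1 := by
        rw [hm1e]
        exact le_csSup (((Bbr G x y).toFinite.image _).bddAbove) ⟨z, hzB, rfl⟩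
      have h3 : f1 ≤ max f1 f2 := le_max_left _ _
      rw [hcong]
      linarith
    · have hz2 : z ∈ Bbr G y x := (bbr_compl G hG hxy).mp hzB
      have hrc := recv_cons G hG w ρ σ hxy hz2
      have hσy : σ y = 1 := by simp [hσdef]
      have hcong : recvTime G hG w ρ σ y z = recvTime G hG w ρ σ2 y z := by
        apply recv_congr
        intro v hv
        have hvB : v ∈ Bbr G y x :=
          bbr_closed G hG hxy.symm hz2 (List.mem_of_mem_tail hv)
        have hvy : v ≠ y := tail_ne_start G (tPath_isPath G hG y z) hv
        have hvB' : v ∉ Bbr G x y := (bbr_compl G hG hxy).mpr hvB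
        simp only [hσdef, if_neg hvy, if_neg hvB']
      have h2 : recvTime G hG w ρ σ2 y z ≤ m2 := by
        rw [hm2e]
        exact le_csSup (((Bbr G y x).toFinite.image _).bddAbove) ⟨z, hz2, rfl⟩
      have h3 : f2 ≤ max f1 f2 := le_max_right _ _
      rw [hrc, hσy, hcong]
      push_cast
      linarith
  have hmem : sSup ((recvTime G hG w ρ σ x) '' Set.univ)
      ∈ {m | ∃ σ', Valid G hG σ' x Set.univ
          ∧ m = sSup ((recvTime G hG w ρ σ' x) '' Set.univ)} := ⟨σ, hvalid, rfl⟩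
  have hne2 : ((recvTime G hG w ρ σ x) '' Set.univ).Nonempty :=
    ⟨recvTime G hG w ρ σ x x, ⟨x, Set.mem_univ x, rfl⟩⟩
  have hsup : sSup ((recvTime G hG w ρ σ x) '' Set.univ) ≤ ρ + w x y + max f1 f2 + ε := by
    apply csSup_le hne2
    rintro b ⟨z, -, rfl⟩
    exact hbound z
  exact le_trans (csInf_le (bset_bddBelow G hG hpos hρ x Set.univ) hmem) hsup

lemma mono_step {w : V → V → ℝ} {ρ : ℝ} (hsym : Wsymm w) (hpos : Wpos G w) (hρ : 0 < ρ)
    {x y : V} (hxy : G.Adj x y)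
    (h : bTime G hG w ρ y (Bbr G y x) ≤ bTime G hG w ρ x (Bbr G x y)) :
    bTimeT G hG w ρ x ≤ bTimeT G hG w ρ y := by
  have h1 := key_up G hG hpos hρ hxy
  rw [max_eq_left h] at h1
  have h2 := key_low G hG hpos hρ hxy Set.univ (Set.subset_univ _)
  rw [hsym y x] at h2
  exact le_trans h1 h2

lemma no_diverge {w : V → V → ℝ} {ρ : ℝ} (hpos : Wpos G w) (hρ : 0 < ρ)
    {c z y : V} (hcy : G.Adj c y) (hzy : G.Adj z y) (hcz : c ≠ z)
    (h1 : bTime G hG w ρ y (Bbr G y c) ≤ bTime G hG w ρ c (Bbr G c y))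
    (h2 : bTime G hG w ρ y (Bbr G y z) ≤ bTime G hG w ρ z (Bbr G z y)) : False := by
  have k1 := key_low G hG hpos hρ hcy (Bbr G y z) (bbr_subset G hG hcy hzy.symm hcz)
  have k2 := key_low G hG hpos hρ hzy (Bbr G y c) (bbr_subset G hG hzy hcy.symm hcz.symm)
  have hw1 := hpos y c hcy.symm
  have hw2 := hpos y z hzy.symm
  linarith

end Aux

/-- A prime broadcast center of `T` always exists. -/
theorem stmt3 {V : Type*} [Fintype V] [DecidableEq V] [Nonempty V]
    (G : SimpleGraph V) (hG : G.IsTree)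
    (w : V → V → ℝ) (hsym : Wsymm w) (hpos : Wpos G w) (ρ : ℝ) (hρ : 0 < ρ) :
    ∃ κ, IsPrime G hG w ρ κ := by
  classical
  set F : V → V → ℝ := fun a b => bTime G hG w ρ a (Bbr G a b) with hF
  let e := Fintype.equivFin V
  set tow : V → V → Prop := fun a b => F a b < F b a ∨ (F a b = F b a ∧ e a < e b) with htow
  have tow_total : ∀ a b : V, a ≠ b → tow a b ∨ tow b a := by
    intro a b hab
    rcases lt_trichotomy (F a b) (F b a) with h | h | h
    · exact Or.inl (Or.inl h)
    · have hne : e a ≠ e b := fun he => hab (e.injective he)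
      rcases lt_or_gt_of_ne hne with h' | h'
      · exact Or.inl (Or.inr ⟨h, h'⟩)
      · exact Or.inr (Or.inr ⟨h.symm, h'⟩)
    · exact Or.inr (Or.inl h)
  have tow_asymm : ∀ a b : V, tow a b → ¬ tow b a := by
    intro a b h1 h2
    rcases h1 with h1 | ⟨h1, h1'⟩ <;> rcases h2 with h2 | ⟨h2, h2'⟩
    · exact absurd h2 (asymm h1)
    · exact absurd h1 (not_lt.mpr (le_of_eq h2))
    · exact absurd h2 (not_lt.mpr (le_of_eq h1))
    · exact absurd h2' (asymm h1')
  have tow_le : ∀ a b : V, tow a b → F a b ≤ F b a :=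
    fun a b h => h.elim le_of_lt (fun h => le_of_eq h.1)
  have stepA : ∃ κ : V, ∀ u, G.Adj κ u → tow u κ := by
    by_contra hcon
    push_neg at hcon
    choose nxt hadj hnt using hcon
    have hfwd : ∀ v, tow v (nxt v) := by
      intro v
      rcases tow_total v (nxt v) (hadj v).ne with h | h
      · exact h
      · exact absurd h (hnt v)
    set s : ℕ → V := fun n => nxt^[n] (Classical.arbitrary V) with hs
    have hsucc : ∀ n, s (n + 1) = nxt (s n) := fun n => Function.iterate_succ_apply' _ _ _
    have hadj' : ∀ n, G.Adj (s n) (s (n + 1)) := fun n => (hsucc n) ▸ hadj (s n)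
    have htow' : ∀ n, tow (s n) (s (n + 1)) := fun n => (hsucc n) ▸ hfwd (s n)
    have hmono : StrictMono (fun n => F (s n) (s (n + 1))) := by
      apply strictMono_nat_of_lt_succ
      intro n
      have hne : s n ≠ s (n + 2) := by
        intro he
        have h2 := htow' (n + 1)
        rw [← he] at h2
        exact tow_asymm _ _ (htow' n) h2
      have k := key_low G hG hpos hρ (hadj' n) (Bbr G (s (n + 1)) (s (n + 2)))
        (bbr_subset G hG (hadj' n) (hadj' (n + 1)) hne)
      have hw := hpos _ _ (hadj' n).symm
      simp only [hF]
      linarith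
    have hinj : Function.Injective (fun n => (s n, s (n + 1))) := by
      intro m n hmn
      simp only [Prod.mk.injEq] at hmn
      exact hmono.injective (by rw [hmn.1, hmn.2])
    obtain ⟨m, n, hmn, heq⟩ := Finite.exists_ne_map_eq_of_infinite (fun n => (s n, s (n + 1)))
    exact hmn (hinj heq)
  obtain ⟨κ, hκ⟩ := stepA
  have claim : ∀ (v k : V) (q : G.Walk v k), q.IsPath → (∀ u, G.Adj k u → tow u k) →
      (bTimeT G hG w ρ k ≤ bTimeT G hG w ρ v ∧
        ∀ z, G.Adj v z → z ∉ q.support → tow z v) := by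
    intro v k q
    induction q with
    | nil =>
      intro _ hk
      exact ⟨le_refl _, fun z hz _ => hk z hz⟩
    | @cons v c _ h q ih =>
      intro hq hk
      obtain ⟨hq', hv⟩ := (SimpleGraph.Walk.cons_isPath_iff _ _).mp hq
      have ihc := ih hq' hk
      have htvc : tow v c := ihc.2 v h.symm hv
      refine ⟨le_trans ihc.1 (mono_step G hG hsym hpos hρ h.symm (tow_le v c htvc)), ?_⟩
      intro z hz hzs
      have hzc : z ≠ c := by
        intro he
        apply hzs
        rw [SimpleGraph.Walk.support_cons]
        exact List.mem_cons_of_mem _ (he ▸ SimpleGraph.Walk.start_mem_support q)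
      by_contra hnt
      have htvz : tow v z := (tow_total v z hz.ne).resolve_right hnt
      exact no_diverge G hG hpos hρ h.symm hz.symm hzc.symm
        (tow_le v c htvc) (tow_le v z htvz)
  refine ⟨κ, ?_, ?_⟩
  · intro v
    exact (claim v κ (tPath G hG v κ) (tPath_isPath G hG v κ) hκ).1
  · intro u hu
    exact tow_le u κ (hκ u hu)

end Postal
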